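/- For the function ψ(v) = v² − Δ²/(4π²v²) − JΔ/(2πv) with Δ > 0 restricted to v < 0, the derivative ψ'(v) = 2v + Δ²/(2π²v³) + JΔ/(2πv²) has at most two zeros on (−∞, 0); equivalently, the curve of equilibria K = −ψ(v) has either zero or two fold points. -/

import Mathlib

open Real

/-- A strictly convex function has at most two zeros. -/
lemma strictconvex_zeros {f : ℝ → ℝ} (hf : StrictConvexOn ℝ Set.univ f) :
    {v : ℝ | f v = 0}.encard ≤ 2 := by
  by_contra h
  push_neg at h
  have h3 : (3:ℕ∞) ≤ {v : ℝ | f v = 0}.encard := Order.add_one_le_of_lt h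
  obtain ⟨t, hts, ht3⟩ := Set.exists_subset_encard_eq h3
  obtain ⟨x, y, z, hxy, hxz, hyz, rfl⟩ := Set.encard_eq_three.mp ht3
  have hx : f x = 0 := hts (by simp)
  have hy : f y = 0 := hts (by simp)
  have hz : f z = 0 := hts (by simp)
  -- wlog we may order: let p < q < r be the sorted versions
  obtain ⟨p, q, r, hpq, hqr, hfp, hfq, hfr⟩ :
      ∃ p q r : ℝ, p < q ∧ q < r ∧ f p = 0 ∧ f q = 0 ∧ f r = 0 := by
    rcases lt_trichotomy x y with h1 | h1 | h1
    · rcases lt_trichotomy y z with h2 | h2 | h2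
      · exact ⟨x, y, z, h1, h2, hx, hy, hz⟩
      · exact absurd h2 hyz
      · rcases lt_trichotomy x z with h3 | h3 | h3
        · exact ⟨x, z, y, h3, h2, hx, hz, hy⟩
        · exact absurd h3 hxz
        · exact ⟨z, x, y, h3, h1, hz, hx, hy⟩
    · exact absurd h1 hxy
    · rcases lt_trichotomy x z with h2 | h2 | h2
      · exact ⟨y, x, z, h1, h2, hy, hx, hz⟩
      · exact absurd h2 hxz
      · rcases lt_trichotomy y z with h3 | h3 | h3
        · exact ⟨y, z, x, h3, h2, hy, hz, hx⟩
        · exact absurd h3 hyz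
        · exact ⟨z, y, x, h3, h1, hz, hy, hx⟩
  set a : ℝ := (r - q) / (r - p) with ha_def
  set b : ℝ := (q - p) / (r - p) with hb_def
  have hrp : 0 < r - p := by linarith
  have ha : 0 < a := by apply div_pos <;> linarith
  have hb : 0 < b := by apply div_pos <;> linarith
  have hab : a + b = 1 := by
    rw [ha_def, hb_def, ← add_div, show r - q + (q - p) = r - p by ring,
      div_self (ne_of_gt hrp)]
  have hcomb : a • p + b • r = q := by
    rw [smul_eq_mul, smul_eq_mul, ha_def, hb_def]
    field_simp
    ring
  have := hf.2 (Set.mem_univ p) (Set.mem_univ r) (by linarith : p ≠ r) ha hb hab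
  rw [hcomb, hfp, hfq, hfr] at this
  simp at this

/-- `ψ'(v) = 2v + Δ²/(2π²v³) + JΔ/(2πv²)` has at most two zeros
on `(-∞, 0)`: the curve of equilibria has either zero or two fold points. -/
theorem stmt_1 (Δ J : ℝ) (hΔ : 0 < Δ) :
    {v : ℝ | v < 0 ∧
      2 * v + Δ ^ 2 / (2 * π ^ 2 * v ^ 3) + J * Δ / (2 * π * v ^ 2) = 0}.encard ≤ 2 := by
  have hπ : (0:ℝ) < π := pi_pos
  set f : ℝ → ℝ := fun v => 2 * v ^ 4 + (J * Δ / (2 * π)) * v + Δ ^ 2 / (2 * π ^ 2) with hf_def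
  have hconv : StrictConvexOn ℝ Set.univ f := by
    have h4 : StrictConvexOn ℝ Set.univ (fun v : ℝ => v ^ 4) :=
      Even.strictConvexOn_pow ⟨2, rfl⟩ (by norm_num)
    have h2 : StrictConvexOn ℝ Set.univ (fun v : ℝ => 2 * v ^ 4) := by
      refine ⟨convex_univ, fun x _ y _ hxy a b ha hb hab => ?_⟩
      have := h4.2 (Set.mem_univ x) (Set.mem_univ y) hxy ha hb hab
      simp only [smul_eq_mul] at this ⊢
      nlinarith
    have hlin : ConvexOn ℝ Set.univ (fun v : ℝ => (J * Δ / (2 * π)) * v + Δ ^ 2 / (2 * π ^ 2)) := by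
      refine ⟨convex_univ, fun x _ y _ a b ha hb hab => le_of_eq ?_⟩
      simp only [smul_eq_mul]
      linear_combination (-(Δ ^ 2 / (2 * π ^ 2))) * hab
    have e : f = (fun v : ℝ => 2 * v ^ 4) + (fun v : ℝ => (J * Δ / (2 * π)) * v + Δ ^ 2 / (2 * π ^ 2)) := by
      ext v
      simp only [hf_def, Pi.add_apply]
      ring
    rw [e]
    exact h2.add_convexOn hlin
  have hsub : {v : ℝ | v < 0 ∧
      2 * v + Δ ^ 2 / (2 * π ^ 2 * v ^ 3) + J * Δ / (2 * π * v ^ 2) = 0} ⊆ {v : ℝ | f v = 0} := by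
    rintro v ⟨hv, heq⟩
    have hv0 : v ≠ 0 := ne_of_lt hv
    have hπ0 : π ≠ 0 := ne_of_gt hπ
    simp only [Set.mem_setOf_eq, hf_def]
    have : f v = v ^ 3 * (2 * v + Δ ^ 2 / (2 * π ^ 2 * v ^ 3) + J * Δ / (2 * π * v ^ 2)) := by
      rw [hf_def]
      field_simp
      ring
    rw [hf_def] at this
    simp only at this
    rw [this, heq, mul_zero]
  exact le_trans (Set.encard_mono hsub) (strictconvex_zeros hconv)
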